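/- Let ω be a majorant satisfying ∫_0^δ ω(t)/t dt ≤ M ω(δ) for all sufficiently small δ > 0 and some constant M > 0, and let G be a proper subdomain of the plane such that each pair of points z, w ∈ G can be joined by a rectifiable curve γ ⊂ G with ∫_γ ω(d_G(ζ))/d_G(ζ) ds(ζ) ≤ C ω(|z−w|) for a fixed constant C = C(G,ω) > 0. Let f = h + ḡ be a harmonic mapping in G, where h and g are analytic in G. Then the following are equivalent: (i) f ∈ L_ω(G); (ii) g ∈ L_ω(G) and h ∈ L_ω(G); (iii) |g| ∈ L_ω(G) and |h| ∈ L_ω(G). -/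

import Mathlib

open MeasureTheory Metric Set Real
open scoped ENNReal NNReal Topology

/-- A majorant: a continuous increasing function `ω : [0,∞) → [0,∞)` with
`ω 0 = 0` such that `ω t / t` is non-increasing for `t > 0`. -/
def IsMajorant (ω : ℝ → ℝ) : Prop :=
  ContinuousOn ω (Ici 0) ∧ MonotoneOn ω (Ici 0) ∧ ω 0 = 0 ∧
    ∀ s t : ℝ, 0 < s → s ≤ t → ω t / t ≤ ω s / s

lemma maj_nonneg {ω : ℝ → ℝ} (hω : IsMajorant ω) {t : ℝ} (ht : 0 ≤ t) : 0 ≤ ω t := by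
  have := hω.2.1 (self_mem_Ici (a := (0:ℝ))) ht ht
  rwa [hω.2.2.1] at this

lemma maj_mono {ω : ℝ → ℝ} (hω : IsMajorant ω) {s t : ℝ} (hs : 0 ≤ s) (hst : s ≤ t) :
    ω s ≤ ω t := hω.2.1 hs (hs.trans hst) hst

lemma dist_frontier_pos {G : Set ℂ} (hGopen : IsOpen G) (hGproper : G ≠ univ)
    {z : ℂ} (hz : z ∈ G) :
    0 < infDist z (frontier G) ∧
      ∀ r : ℝ, r < infDist z (frontier G) → closedBall z r ⊆ G := by
  obtain ⟨y, hyf, hyd⟩ := exists_mem_frontier_infDist_compl_eq_dist hz hGproper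
  have hzf : z ∉ frontier G := by
    simp only [hGopen.frontier_eq, mem_diff]
    exact fun hc => hc.2 hz
  have hpos : 0 < infDist z (frontier G) :=
    (isClosed_frontier.notMem_iff_infDist_pos ⟨y, hyf⟩).1 hzf
  refine ⟨hpos, fun r hr w hw => ?_⟩
  by_contra hwG
  have h1 : infDist z Gᶜ ≤ r := le_trans (infDist_le_dist_of_mem hwG) (by rwa [mem_closedBall, dist_comm] at hw)
  have h2 : infDist z (frontier G) ≤ infDist z Gᶜ := by
    rw [hyd]; exact infDist_le_dist_of_mem hyf
  linarith

lemma lipschitz_of_deriv_bound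
    (ω : ℝ → ℝ) (hω : IsMajorant ω)
    (G : Set ℂ) (hGopen : IsOpen G) (hGproper : G ≠ univ)
    (C : ℝ)
    (hcurve : ∀ z ∈ G, ∀ w ∈ G, ∃ γ : ℝ → ℂ,
      γ 0 = z ∧ γ 1 = w ∧ (∀ t ∈ Icc (0:ℝ) 1, γ t ∈ G) ∧
      ContDiffOn ℝ 1 γ (Icc (0:ℝ) 1) ∧
      (∫ t in (0:ℝ)..1,
          ω (infDist (γ t) (frontier G)) / infDist (γ t) (frontier G) * ‖deriv γ t‖)
        ≤ C * ω (dist z w))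
    (F : ℂ → ℂ) (hF : DifferentiableOn ℂ F G) (K : ℝ) (hK : 0 ≤ K)
    (hbound : ∀ z ∈ G, ‖deriv F z‖ ≤ K * (ω (infDist z (frontier G)) / infDist z (frontier G))) :
    ∀ z ∈ G, ∀ w ∈ G, ‖F z - F w‖ ≤ K * C * ω (dist z w) := by
  intro z hz w hw
  obtain ⟨γ, hγ0, hγ1, hmem, hsm, hint⟩ := hcurve z hz w hw
  set dd : ℝ → ℝ := fun t => infDist (γ t) (frontier G) with hdd
  set σ : ℝ → ℝ := fun t => ω (dd t) / dd t * ‖deriv γ t‖ with hσ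
  set φ : ℝ → ℂ := fun t => deriv F (γ t) * deriv γ t with hφ
  have hγc : ContinuousOn γ (Icc 0 1) := hsm.continuousOn
  set γ' : ℝ → ℂ := derivWithin γ (Icc (0:ℝ) 1) with hγ'
  have hγ'c : ContinuousOn γ' (Icc 0 1) :=
    hsm.continuousOn_derivWithin (uniqueDiffOn_Icc zero_lt_one) le_rfl
  have hγat : ∀ t ∈ Ioo (0:ℝ) 1, HasDerivAt γ (deriv γ t) t := by
    intro t ht
    have hmemn : Icc (0:ℝ) 1 ∈ 𝓝 t := Icc_mem_nhds ht.1 ht.2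
    exact ((hsm.differentiableOn one_ne_zero) t (Ioo_subset_Icc_self ht)).differentiableAt
      hmemn |>.hasDerivAt
  have hderiv_eq : ∀ t ∈ Ioo (0:ℝ) 1, deriv γ t = γ' t := by
    intro t ht
    exact (derivWithin_of_mem_nhds (Icc_mem_nhds ht.1 ht.2)).symm
  have hF' : ContinuousOn (deriv F) G := ((hF.analyticOnNhd hGopen).deriv).continuousOn
  -- continuous versions of the integrands
  set ψ : ℝ → ℂ := fun t => deriv F (γ t) * γ' t with hψ
  set σ₀ : ℝ → ℝ := fun t => ω (dd t) / dd t * ‖γ' t‖ with hσ₀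
  have hddc : ContinuousOn dd (Icc 0 1) :=
    (continuous_infDist_pt (frontier G)).comp_continuousOn hγc
  have hddpos : ∀ t ∈ Icc (0:ℝ) 1, 0 < dd t := fun t ht =>
    (dist_frontier_pos hGopen hGproper (hmem t ht)).1
  have hωddc : ContinuousOn (fun t => ω (dd t) / dd t) (Icc 0 1) := by
    apply ContinuousOn.div
    · exact hω.1.comp hddc fun t ht => (hddpos t ht).le
    · exact hddc
    · exact fun t ht => (hddpos t ht).ne'
  have hψc : ContinuousOn ψ (Icc 0 1) :=
    (hF'.comp hγc fun t ht => hmem t ht).mul hγ'c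
  have hσ₀c : ContinuousOn σ₀ (Icc 0 1) := hωddc.mul hγ'c.norm
  have hae : ∀ᵐ t ∂volume.restrict (uIoc (0:ℝ) 1), t ∈ Ioo (0:ℝ) 1 := by
    rw [uIoc_of_le zero_le_one]
    refine (ae_restrict_iff' measurableSet_Ioc).2 ?_
    have : {t : ℝ | ¬ (t ∈ Ioc (0:ℝ) 1 → t ∈ Ioo (0:ℝ) 1)} ⊆ {(1:ℝ)} := by
      intro t ht
      simp only [mem_setOf_eq, Classical.not_imp, mem_Ioc, mem_Ioo, not_and, not_lt] at ht
      have := ht.2 ht.1.1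
      exact le_antisymm ht.1.2 this
    exact (MeasureTheory.ae_iff).2 (measure_mono_null this (measure_singleton 1))
  have hψint : IntervalIntegrable ψ volume 0 1 :=
    (hψc.mono (by rw [uIcc_of_le zero_le_one])).intervalIntegrable
  have hσ₀int : IntervalIntegrable σ₀ volume 0 1 :=
    (hσ₀c.mono (by rw [uIcc_of_le zero_le_one])).intervalIntegrable
  have hφae : φ =ᵐ[volume.restrict (uIoc (0:ℝ) 1)] ψ := by
    filter_upwards [hae] with t ht
    simp only [hφ, hψ, hderiv_eq t ht]
  have hσae : σ =ᵐ[volume.restrict (uIoc (0:ℝ) 1)] σ₀ := by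
    filter_upwards [hae] with t ht
    simp only [hσ, hσ₀, hderiv_eq t ht]
  have hφint : IntervalIntegrable φ volume 0 1 := by
    rw [intervalIntegrable_iff] at hψint ⊢
    exact hψint.congr_fun_ae hφae.symm
  have hσint : IntervalIntegrable σ volume 0 1 := by
    rw [intervalIntegrable_iff] at hσ₀int ⊢
    exact hσ₀int.congr_fun_ae hσae.symm
  have hFγc : ContinuousOn (F ∘ γ) (Icc 0 1) :=
    hF.continuousOn.comp hγc fun t ht => hmem t ht
  have hFTC : ∫ t in (0:ℝ)..1, φ t = F (γ 1) - F (γ 0) := by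
    refine intervalIntegral.integral_eq_sub_of_hasDeriv_right_of_le zero_le_one hFγc
      (fun t ht => ?_) hφint
    have h1 : HasDerivAt γ (deriv γ t) t := hγat t ht
    have h2 : HasDerivAt F (deriv F (γ t)) (γ t) :=
      (hF.differentiableAt (hGopen.mem_nhds (hmem t (Ioo_subset_Icc_self ht)))).hasDerivAt
    exact (h2.comp t h1).hasDerivWithinAt
  have key : ‖F z - F w‖ = ‖∫ t in (0:ℝ)..1, φ t‖ := by
    rw [hFTC, hγ0, hγ1, norm_sub_rev]
  rw [key]
  calc ‖∫ t in (0:ℝ)..1, φ t‖ ≤ ∫ t in (0:ℝ)..1, ‖φ t‖ :=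
        intervalIntegral.norm_integral_le_integral_norm zero_le_one
    _ ≤ ∫ t in (0:ℝ)..1, K * σ t := by
        refine intervalIntegral.integral_mono_on zero_le_one hφint.norm
          (hσint.const_mul K) (fun t ht => ?_)
        have hb := hbound (γ t) (hmem t ht)
        calc ‖φ t‖ = ‖deriv F (γ t)‖ * ‖deriv γ t‖ := norm_mul _ _
          _ ≤ K * (ω (dd t) / dd t) * ‖deriv γ t‖ :=
              mul_le_mul_of_nonneg_right hb (norm_nonneg _)
          _ = K * σ t := by rw [hσ]; ring
    _ = K * ∫ t in (0:ℝ)..1, σ t := intervalIntegral.integral_const_mul K σ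
    _ ≤ K * (C * ω (dist z w)) := mul_le_mul_of_nonneg_left hint hK
    _ = K * C * ω (dist z w) := by ring

lemma hasDerivAt_conj_conj {q : ℂ → ℂ} {d x : ℂ}
    (hq : HasDerivAt q d ((starRingEnd ℂ) x)) :
    HasDerivAt (fun w => (starRingEnd ℂ) (q ((starRingEnd ℂ) w))) ((starRingEnd ℂ) d) x := by
  rw [hasDerivAt_iff_tendsto] at hq ⊢
  have hc : Filter.Tendsto (fun w : ℂ => (starRingEnd ℂ) w) (𝓝 x) (𝓝 ((starRingEnd ℂ) x)) :=
    (Complex.continuous_conj).tendsto x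
  refine (hq.comp hc).congr fun w => ?_
  simp only [Function.comp_apply]
  have e1 : (starRingEnd ℂ) w - (starRingEnd ℂ) x = (starRingEnd ℂ) (w - x) := (map_sub _ _ _).symm
  have e2 : (starRingEnd ℂ) (q ((starRingEnd ℂ) w)) - (starRingEnd ℂ) (q ((starRingEnd ℂ) x)) -
      (w - x) • (starRingEnd ℂ) d =
      (starRingEnd ℂ) (q ((starRingEnd ℂ) w) - q ((starRingEnd ℂ) x) -
        ((starRingEnd ℂ) w - (starRingEnd ℂ) x) • d) := by
    simp only [smul_eq_mul, map_sub, map_mul, Complex.conj_conj]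
  rw [e2, RCLike.norm_conj, e1, RCLike.norm_conj]

/-- Non-centered Schwarz–Pick estimate. -/
lemma norm_deriv_le_of_bounded {H : ℂ → ℂ} {z : ℂ} {ρ M : ℝ}
    (hρ : 0 < ρ) (hd : DifferentiableOn ℂ H (ball z ρ))
    (hM : ∀ w ∈ ball z ρ, ‖H w‖ < M) :
    ‖deriv H z‖ ≤ (M^2 - ‖H z‖^2) / (M * ρ) := by
  have hzb : z ∈ ball z ρ := mem_ball_self hρ
  set a := H z with ha
  have haM : ‖a‖ < M := hM z hzb
  have hM0 : 0 < M := lt_of_le_of_lt (norm_nonneg _) haM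
  have hnormsq : ∀ ζ : ℂ, ‖ζ‖^2 = Complex.normSq ζ := fun ζ => by
    rw [← Complex.sq_norm]
  have e3 : ‖((M:ℂ))^2‖ = M*M := by
    rw [← Complex.ofReal_pow, Complex.norm_real, Real.norm_of_nonneg (by positivity)]; ring
  have hMC : ((M:ℂ))^2 = ((M*M : ℝ) : ℂ) := by push_cast; ring
  have hden : ∀ ζ : ℂ, ‖ζ‖ < M → ((M:ℂ)^2 - (starRingEnd ℂ) a * ζ) ≠ 0 := by
    intro ζ hζ hc
    have h1 : ‖(starRingEnd ℂ) a * ζ‖ < M * M := by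
      rw [norm_mul, RCLike.norm_conj]
      rcases eq_or_lt_of_le (norm_nonneg a) with h0 | h0
      · rw [← h0]; simpa using mul_pos hM0 hM0
      · exact mul_lt_mul'' haM hζ (norm_nonneg _) (norm_nonneg _)
    have h2 : ((M:ℂ)^2) = (starRingEnd ℂ) a * ζ := sub_eq_zero.mp hc
    rw [← h2, e3] at h1
    exact lt_irrefl _ h1
  -- the key modulus inequality for the Möbius map
  have hkey : ∀ ζ : ℂ, ‖ζ‖ < M →
      ‖(M:ℂ)^2 * (ζ - a) / ((M:ℂ)^2 - (starRingEnd ℂ) a * ζ)‖ < M := by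
    intro ζ hζ
    have hdz := hden ζ hζ
    have hdpos : 0 < ‖(M:ℂ)^2 - (starRingEnd ℂ) a * ζ‖ := norm_pos_iff.mpr hdz
    rw [norm_div, div_lt_iff₀ hdpos]
    have hna : Complex.normSq a < M*M := by
      rw [← hnormsq]; nlinarith [norm_nonneg a]
    have hnz : Complex.normSq ζ < M*M := by
      rw [← hnormsq]; nlinarith [norm_nonneg ζ]
    have hsq : (‖(M:ℂ)^2 * (ζ - a)‖)^2 < (M * ‖(M:ℂ)^2 - (starRingEnd ℂ) a * ζ‖)^2 := by
      rw [norm_mul, e3, mul_pow, mul_pow, hnormsq (ζ - a),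
        show (M * ‖(M:ℂ)^2 - (starRingEnd ℂ) a * ζ‖)^2
            = M^2 * ‖(M:ℂ)^2 - (starRingEnd ℂ) a * ζ‖^2 from mul_pow _ _ 2,
        hnormsq ((M:ℂ)^2 - (starRingEnd ℂ) a * ζ)]
      have expand1 : Complex.normSq (ζ - a) =
          Complex.normSq ζ - 2*(ζ * (starRingEnd ℂ) a).re + Complex.normSq a := by
        simp only [Complex.normSq_apply, Complex.sub_re, Complex.sub_im, Complex.mul_re,
          Complex.mul_im, Complex.conj_re, Complex.conj_im]
        ring
      have expand2 : Complex.normSq ((M:ℂ)^2 - (starRingEnd ℂ) a * ζ) =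
          (M*M)^2 - 2*(M*M)*(ζ * (starRingEnd ℂ) a).re +
            Complex.normSq a * Complex.normSq ζ := by
        rw [hMC]
        simp only [Complex.normSq_apply, Complex.sub_re, Complex.sub_im, Complex.mul_re,
          Complex.mul_im, Complex.conj_re, Complex.conj_im, Complex.ofReal_re,
          Complex.ofReal_im]
        ring
      rw [expand1, expand2]
      nlinarith [mul_pos (mul_pos (sub_pos.mpr hna) (sub_pos.mpr hnz)) (mul_pos hM0 hM0)]
    have hnn : 0 ≤ M * ‖(M:ℂ)^2 - (starRingEnd ℂ) a * ζ‖ := by positivity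
    exact lt_of_pow_lt_pow_left₀ 2 hnn hsq
  -- the composed map
  set Φ : ℂ → ℂ := fun w => (M:ℂ)^2 * (H w - a) / ((M:ℂ)^2 - (starRingEnd ℂ) a * H w) with hΦ
  have hΦd : DifferentiableOn ℂ Φ (ball z ρ) := by
    apply DifferentiableOn.div
    · exact (differentiableOn_const _).mul (hd.sub_const a)
    · exact (differentiableOn_const _).sub ((differentiableOn_const _).mul hd)
    · exact fun w hw => hden (H w) (hM w hw)
  have hΦz : Φ z = 0 := by
    simp only [hΦ, ← ha, sub_self, mul_zero, zero_div]
  have hmaps : MapsTo Φ (ball z ρ) (ball (Φ z) M) := by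
    intro w hw
    rw [hΦz, mem_ball, dist_zero_right]
    exact hkey (H w) (hM w hw)
  have hschwarz : ‖deriv Φ z‖ ≤ M / ρ :=
    Complex.norm_deriv_le_div_of_mapsTo_ball hΦd (hmaps.mono_right ball_subset_closedBall) hρ
  -- compute deriv Φ z
  have hHz : HasDerivAt H (deriv H z) z :=
    ((hd z hzb).differentiableAt (isOpen_ball.mem_nhds hzb)).hasDerivAt
  set D : ℂ := (M:ℂ)^2 - (starRingEnd ℂ) a * a with hD
  have hDne : D ≠ 0 := hden a haM
  have hu : HasDerivAt (fun w => (M:ℂ)^2 * (H w - a)) ((M:ℂ)^2 * deriv H z) z :=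
    ((hHz.sub_const a).const_mul ((M:ℂ)^2))
  have hv : HasDerivAt (fun w => (M:ℂ)^2 - (starRingEnd ℂ) a * H w)
      (-((starRingEnd ℂ) a * deriv H z)) z := by
    simpa using ((hHz.const_mul ((starRingEnd ℂ) a)).const_sub ((M:ℂ)^2))
  have hΦder : HasDerivAt Φ
      (((M:ℂ)^2 * deriv H z * D - (M:ℂ)^2 * (a - a) * -((starRingEnd ℂ) a * deriv H z)) / D^2)
      z := by
    have := hu.div hv (by rw [← hD, ← ha] at *; exact hDne)
    simpa [← ha, hΦ, hD, Pi.div_def] using this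
  have hderΦ : deriv Φ z = (M:ℂ)^2 * deriv H z / D := by
    rw [hΦder.deriv, sub_self, mul_zero, zero_mul, sub_zero,
      div_eq_div_iff (pow_ne_zero 2 hDne) hDne]
    ring
  -- norm of D
  have hDval : D = ((M^2 - ‖a‖^2 : ℝ) : ℂ) := by
    rw [hD]
    have h5 : (starRingEnd ℂ) a * a = (Complex.normSq a : ℂ) := by
      rw [mul_comm, Complex.mul_conj]
    rw [h5, hnormsq a]
    push_cast
    ring
  have hpos : 0 < M^2 - ‖a‖^2 := by nlinarith [norm_nonneg a]
  have hDnorm : ‖D‖ = M^2 - ‖a‖^2 := by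
    rw [hDval, Complex.norm_real, Real.norm_of_nonneg hpos.le]
  have hfinal : ‖deriv Φ z‖ = M^2 * ‖deriv H z‖ / (M^2 - ‖a‖^2) := by
    rw [hderΦ, norm_div, norm_mul, hDnorm, ← Complex.ofReal_pow, Complex.norm_real,
      Real.norm_of_nonneg (by positivity)]
  rw [hfinal] at hschwarz
  rw [div_le_div_iff₀ hpos hρ] at hschwarz
  rw [le_div_iff₀ (by positivity : (0:ℝ) < M * ρ)]
  nlinarith [hschwarz, hM0, norm_nonneg (deriv H z)]

lemma hasDerivAt_reflect {h : ℂ → ℂ} {z e w₀ d : ℂ}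
    (hq : HasDerivAt h d (z + e * (starRingEnd ℂ) (w₀ - z))) :
    HasDerivAt (fun w => (starRingEnd ℂ) (h (z + e * (starRingEnd ℂ) (w - z))))
      ((starRingEnd ℂ) d * (starRingEnd ℂ) e) w₀ := by
  have haff : ∀ v : ℂ, HasDerivAt (fun v : ℂ => z + e * (v - (starRingEnd ℂ) z)) e v := by
    intro v
    simpa using (((hasDerivAt_id v).sub_const ((starRingEnd ℂ) z)).const_mul e).const_add z
  rw [map_sub] at hq
  have hQd : HasDerivAt (fun v => h (z + e * (v - (starRingEnd ℂ) z))) (d * e)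
      ((starRingEnd ℂ) w₀) := by
    have := hq.comp ((starRingEnd ℂ) w₀) (haff ((starRingEnd ℂ) w₀))
    simpa [Function.comp_def] using this
  have := hasDerivAt_conj_conj (q := fun v => h (z + e * (v - (starRingEnd ℂ) z))) hQd
  rw [map_mul] at this
  convert this using 2 with w
  rw [map_sub]

lemma pavlovic_bound
    (ω : ℝ → ℝ) (hω : IsMajorant ω)
    (G : Set ℂ) (hGopen : IsOpen G) (hGproper : G ≠ univ)
    (h : ℂ → ℂ) (hh : DifferentiableOn ℂ h G) (K : ℝ) (hK : 0 ≤ K)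
    (hlip : ∀ z ∈ G, ∀ w ∈ G, |‖h z‖ - ‖h w‖| ≤ K * ω (dist z w)) :
    ∀ z ∈ G, ‖deriv h z‖ ≤
      12*K * (ω (infDist z (frontier G)) / infDist z (frontier G)) := by
  intro z hz
  obtain ⟨hdpos, hball⟩ := dist_frontier_pos hGopen hGproper hz
  set d := infDist z (frontier G) with hd
  set ρ := d/2 with hρdef
  have hρ : 0 < ρ := by positivity
  have hsub : closedBall z ρ ⊆ G := hball ρ (by rw [hρdef]; linarith)
  have hsub' : ball z ρ ⊆ G := ball_subset_closedBall.trans hsub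
  set m := ‖h z‖ with hm
  set s := K * ω ρ with hs
  have hωρ : 0 ≤ ω ρ := maj_nonneg hω hρ.le
  have hs0 : 0 ≤ s := mul_nonneg hK hωρ
  have hosc : ∀ w ∈ ball z ρ, ‖h w‖ ≤ m + s ∧ m - s ≤ ‖h w‖ := by
    intro w hw
    have h1 := hlip w (hsub' hw) z hz
    have h2 : ω (dist w z) ≤ ω ρ :=
      maj_mono hω dist_nonneg (le_of_lt (mem_ball.mp hw))
    have h3 : |‖h w‖ - m| ≤ s := le_trans h1 (by
      rw [hs]; exact mul_le_mul_of_nonneg_left h2 hK)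
    rw [abs_le] at h3
    constructor <;> linarith [h3.1, h3.2]
  have hmain : ‖deriv h z‖ ≤ 6*s/ρ := by
    rcases le_or_gt m s with hcase | hcase
    · -- m ≤ s : direct Schwarz estimate
      have hstep : ∀ ε : ℝ, 0 < ε → ‖deriv h z‖ ≤ (3*s+ε)/ρ := by
        intro ε hε
        refine Complex.norm_deriv_le_div_of_mapsTo_ball
          (hh.mono hsub') (fun w hw => ?_) hρ
        rw [mem_closedBall, dist_eq_norm]; apply le_of_lt
        calc ‖h w - h z‖ ≤ ‖h w‖ + ‖h z‖ := norm_sub_le _ _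
          _ ≤ (m + s) + m := by
              have := (hosc w hw).1; rw [← hm]; linarith
          _ < 3*s + ε := by linarith
      refine le_trans (le_of_forall_pos_le_add fun ε hε => ?_) ((div_le_div_iff_of_pos_right hρ).mpr (by linarith) : 3*s/ρ ≤ 6*s/ρ)
      have := hstep (ε*ρ) (by positivity)
      calc ‖deriv h z‖ ≤ (3*s+ε*ρ)/ρ := this
        _ = 3*s/ρ + ε := by field_simp
    · -- s < m : reflection trick
      have hm0 : 0 < m := lt_of_le_of_lt hs0 hcase
      have hrefl_mem : ∀ e : ℂ, ‖e‖ = 1 → ∀ w ∈ ball z ρ,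
          z + e * (starRingEnd ℂ) (w - z) ∈ ball z ρ := by
        intro e he w hw
        rw [mem_ball, dist_eq_norm]
        have : z + e * (starRingEnd ℂ) (w - z) - z = e * (starRingEnd ℂ) (w - z) := by ring
        rw [this, norm_mul, he, one_mul, RCLike.norm_conj, ← dist_eq_norm]
        exact mem_ball.mp hw
      have hhat : ∀ w ∈ ball z ρ, HasDerivAt h (deriv h w) w := fun w hw =>
        (hh.differentiableAt (hGopen.mem_nhds (hsub' hw))).hasDerivAt
      have claim : ∀ e : ℂ, ‖e‖ = 1 →
          ‖deriv h z * (starRingEnd ℂ) (h z) +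
            h z * ((starRingEnd ℂ) (deriv h z) * (starRingEnd ℂ) e)‖
            ≤ (4*m*s + 2*s^2)/ρ := by
        intro e he
        set HE : ℂ → ℂ :=
          fun w => h w * (starRingEnd ℂ) (h (z + e * (starRingEnd ℂ) (w - z))) with hHE
        have hHEd : ∀ w ∈ ball z ρ, HasDerivAt HE
            (deriv h w * (starRingEnd ℂ) (h (z + e * (starRingEnd ℂ) (w - z))) +
              h w * ((starRingEnd ℂ) (deriv h (z + e * (starRingEnd ℂ) (w - z))) *
              (starRingEnd ℂ) e)) w := by
          intro w hw
          exact (hhat w hw).mul (hasDerivAt_reflect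
            (hhat _ (hrefl_mem e he w hw)))
        have hHEdiff : DifferentiableOn ℂ HE (ball z ρ) := fun w hw =>
          ((hHEd w hw).differentiableAt).differentiableWithinAt
        have hHEz : deriv HE z = deriv h z * (starRingEnd ℂ) (h z) +
            h z * ((starRingEnd ℂ) (deriv h z) * (starRingEnd ℂ) e) := by
          have := (hHEd z (mem_ball_self hρ)).deriv
          simpa using this
        have hHEbound : ∀ w ∈ ball z ρ, ‖HE w‖ ≤ (m+s)^2 := by
          intro w hw
          rw [hHE]
          simp only [norm_mul, RCLike.norm_conj]
          have h1 := (hosc w hw).1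
          have h2 := (hosc _ (hrefl_mem e he w hw)).1
          have hnn : (0:ℝ) ≤ m + s := by positivity
          calc ‖h w‖ * ‖h (z + e * (starRingEnd ℂ) (w - z))‖ ≤ (m+s) * (m+s) :=
            mul_le_mul h1 h2 (norm_nonneg _) hnn
          _ = (m+s)^2 := by ring
        have hHEznorm : ‖HE z‖ = m^2 := by
          rw [hHE]
          simp only [norm_mul, RCLike.norm_conj]
          have : z + e * (starRingEnd ℂ) (z - z) = z := by simp
          rw [this, ← hm]; ring
        have hstep : ∀ ε : ℝ, 0 < ε →
            ‖deriv HE z‖ ≤ (4*m*s + 2*s^2 + 2*ε)/ρ := by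
          intro ε hε
          have hMpos : 0 < (m+s)^2 + ε := by positivity
          have hb := norm_deriv_le_of_bounded (M := (m+s)^2 + ε) hρ hHEdiff
            (fun w hw => lt_of_le_of_lt (hHEbound w hw) (by linarith))
          rw [hHEznorm] at hb
          refine le_trans hb ?_
          rw [div_le_div_iff₀ (by positivity) (by positivity)]
          nlinarith [mul_nonneg hρ.le (sq_nonneg (2*m*s+s^2+ε))]
        have : ∀ ε : ℝ, 0 < ε → ‖deriv HE z‖ ≤ (4*m*s + 2*s^2)/ρ + ε := by
          intro ε hε
          have := hstep (ε*ρ/2) (by positivity)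
          calc ‖deriv HE z‖ ≤ (4*m*s + 2*s^2 + 2*(ε*ρ/2))/ρ := this
            _ = (4*m*s + 2*s^2)/ρ + ε := by field_simp
        rw [← hHEz]
        exact le_of_forall_pos_le_add this
      have c1 := claim 1 (by simp)
      have c2 := claim (-1) (by simp)
      have hsum : deriv h z * (starRingEnd ℂ) (h z) +
            h z * ((starRingEnd ℂ) (deriv h z) * (starRingEnd ℂ) 1) +
          (deriv h z * (starRingEnd ℂ) (h z) +
            h z * ((starRingEnd ℂ) (deriv h z) * (starRingEnd ℂ) (-1))) =
          2 * (deriv h z * (starRingEnd ℂ) (h z)) := by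
        simp only [map_one, map_neg]
        ring
      have hnorm2 : 2 * m * ‖deriv h z‖ ≤ 2*((4*m*s + 2*s^2)/ρ) := by
        have h6 : ‖(2:ℂ) * (deriv h z * (starRingEnd ℂ) (h z))‖ =
            2 * m * ‖deriv h z‖ := by
          simp only [norm_mul, RCLike.norm_conj, Complex.norm_ofNat, ← hm]
          ring
        calc 2 * m * ‖deriv h z‖ = ‖(2:ℂ) * (deriv h z * (starRingEnd ℂ) (h z))‖ := h6.symm
          _ = ‖deriv h z * (starRingEnd ℂ) (h z) +
                h z * ((starRingEnd ℂ) (deriv h z) * (starRingEnd ℂ) 1) +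
              (deriv h z * (starRingEnd ℂ) (h z) +
                h z * ((starRingEnd ℂ) (deriv h z) * (starRingEnd ℂ) (-1)))‖ := by
            rw [hsum]
          _ ≤ _ := norm_add_le _ _
          _ ≤ 2*((4*m*s + 2*s^2)/ρ) := by linarith [c1, c2]
      -- divide by 2m
      have hss : s^2 ≤ s * m := by nlinarith
      have e7 : 2*((4*m*s + 2*s^2)/ρ) = (8*m*s+4*s^2)/ρ := by ring
      rw [e7, le_div_iff₀ hρ] at hnorm2
      rw [le_div_iff₀ hρ]
      nlinarith [hnorm2, hss, mul_pos hm0 hρ, hm0, norm_nonneg (deriv h z)]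
  -- from 6s/ρ to the final bound
  have hωd : ω ρ ≤ ω d := maj_mono hω hρ.le (by rw [hρdef]; linarith)
  calc ‖deriv h z‖ ≤ 6*s/ρ := hmain
    _ = 12*s/d := by rw [hρdef]; field_simp; ring
    _ ≤ 12*K*ω d/d := by
        apply (div_le_div_iff_of_pos_right hdpos).mpr
        rw [hs]
        nlinarith [hωd, hK]
    _ = 12*K*(ω d/d) := by ring

lemma intervalIntegral_conj {F : ℝ → ℂ} {a b : ℝ} :
    (∫ t in a..b, (starRingEnd ℂ) (F t)) = (starRingEnd ℂ) (∫ t in a..b, F t) := by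
  simp [intervalIntegral, integral_conj, map_sub]

lemma integral_circleMap_one : (∫ θ in (0:ℝ)..2*π, circleMap 0 1 θ) = 0 := by
  have hder : ∀ θ ∈ uIcc (0:ℝ) (2*π), HasDerivAt (fun t => -Complex.I * circleMap 0 1 t)
      (circleMap 0 1 θ) θ := by
    intro θ _
    have h2 := (hasDerivAt_circleMap 0 1 θ).const_mul (-Complex.I)
    refine h2.congr_deriv ?_
    have : -Complex.I * (circleMap 0 1 θ * Complex.I) =
        -(Complex.I*Complex.I) * circleMap 0 1 θ := by ring
    rw [this, Complex.I_mul_I]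
    ring
  rw [intervalIntegral.integral_eq_sub_of_hasDerivAt hder
    ((continuous_circleMap 0 1).intervalIntegrable 0 (2*π))]
  have hper : circleMap 0 1 (2*π) = circleMap 0 1 0 := by
    have := periodic_circleMap 0 1 0
    simpa using this
  rw [hper]
  ring

lemma circleMap_one_ne_zero (θ : ℝ) : circleMap 0 1 θ ≠ 0 := by
  intro hc
  have : ‖circleMap 0 1 θ‖ = 1 := by simpa using norm_circleMap_zero 1 θ
  rw [hc] at this
  simp at this

lemma norm_circleMap_one (θ : ℝ) : ‖circleMap 0 1 θ‖ = 1 := by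
  simpa using norm_circleMap_zero 1 θ

lemma circle_integral_kernel_mul {v : ℂ → ℂ} {z : ℂ} {r : ℝ} (hr : 0 < r)
    (hv : DifferentiableOn ℂ v (closedBall z r)) :
    (∫ θ in (0:ℝ)..2*π, circleMap 0 1 θ * v (circleMap z r θ)) = 0 := by
  have hvd : ∀ ζ ∈ ball z r \ (∅ : Set ℂ), DifferentiableAt ℂ v ζ := by
    intro ζ hζ
    exact hv.differentiableAt
      (Filter.mem_of_superset (isOpen_ball.mem_nhds hζ.1) ball_subset_closedBall)
  have h0 : (∮ ζ in C(z, r), v ζ) = 0 :=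
    Complex.circleIntegral_eq_zero_of_differentiable_on_off_countable hr.le countable_empty
      hv.continuousOn hvd
  have h1 : (∮ ζ in C(z, r), v ζ)
      = ∫ θ in (0:ℝ)..2*π, ((r:ℂ) * Complex.I) * (circleMap 0 1 θ * v (circleMap z r θ)) := by
    simp only [circleIntegral]
    refine intervalIntegral.integral_congr fun θ _ => ?_
    rw [deriv_circleMap, smul_eq_mul]
    have hu : circleMap 0 r θ = (r:ℂ) * circleMap 0 1 θ := by simp [circleMap]
    rw [hu]
    ring
  rw [h1, intervalIntegral.integral_const_mul] at h0
  rcases mul_eq_zero.mp h0 with hcon | hgood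
  · exfalso
    rcases mul_eq_zero.mp hcon with hc | hc
    · exact (Complex.ofReal_ne_zero.mpr hr.ne') hc
    · exact Complex.I_ne_zero hc
  · exact hgood

lemma circle_integral_kernel_conj {v : ℂ → ℂ} {z : ℂ} {r : ℝ} (hr : 0 < r)
    (hv : DifferentiableOn ℂ v (closedBall z r)) :
    (∫ θ in (0:ℝ)..2*π, (starRingEnd ℂ) (circleMap 0 1 θ) * v (circleMap z r θ))
      = 2*(π:ℂ)*(r:ℂ) * deriv v z := by
  have hR : (0:ℝ≥0) < r.toNNReal := by simpa using hr
  have hcoe : ((r.toNNReal : ℝ≥0) : ℝ) = r := Real.coe_toNNReal r hr.le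
  have hv' : DifferentiableOn ℂ v (closedBall z (r.toNNReal : ℝ)) := by rwa [hcoe]
  have hps := hv'.hasFPowerSeriesOnBall hR
  have hda : deriv v z = cauchyPowerSeries v z ((r.toNNReal : ℝ≥0) : ℝ) 1 (fun _ => 1) :=
    hps.hasFPowerSeriesAt.deriv
  rw [hcoe, cauchyPowerSeries_apply] at hda
  have h1 : (∮ ζ in C(z, r), ((1:ℂ) / (ζ - z)) ^ 1 • (ζ - z)⁻¹ • v ζ)
      = ∫ θ in (0:ℝ)..2*π, (Complex.I/(r:ℂ)) *
          ((starRingEnd ℂ) (circleMap 0 1 θ) * v (circleMap z r θ)) := by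
    simp only [circleIntegral]
    refine intervalIntegral.integral_congr fun θ _ => ?_
    rw [deriv_circleMap, circleMap_sub_center]
    have hu : circleMap 0 r θ = (r:ℂ) * circleMap 0 1 θ := by simp [circleMap]
    have huinv : (circleMap 0 1 θ)⁻¹ = (starRingEnd ℂ) (circleMap 0 1 θ) :=
      Complex.inv_eq_conj (norm_circleMap_one θ)
    rw [smul_eq_mul, smul_eq_mul, hu, ← huinv]
    have hrne : (r:ℂ) ≠ 0 := Complex.ofReal_ne_zero.mpr hr.ne'
    have hune : circleMap 0 1 θ ≠ 0 := circleMap_one_ne_zero θ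
    field_simp
    rw [smul_eq_mul, ← mul_assoc, mul_one_div_cancel (mul_ne_zero hrne hune), one_mul]
  rw [h1, intervalIntegral.integral_const_mul, smul_eq_mul] at hda
  have hπ : (π:ℂ) ≠ 0 := Complex.ofReal_ne_zero.mpr Real.pi_ne_zero
  have hrne : (r:ℂ) ≠ 0 := Complex.ofReal_ne_zero.mpr hr.ne'
  have hIne := Complex.I_ne_zero
  field_simp at hda
  apply mul_left_cancel₀ hIne
  linear_combination -Complex.I * hda

lemma deriv_bounds_of_f_lip
    (ω : ℝ → ℝ) (hω : IsMajorant ω)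
    (G : Set ℂ) (hGopen : IsOpen G) (hGproper : G ≠ univ)
    (h g f : ℂ → ℂ) (hh : DifferentiableOn ℂ h G) (hg : DifferentiableOn ℂ g G)
    (hfdec : ∀ z ∈ G, f z = h z + (starRingEnd ℂ) (g z)) (K : ℝ) (hK : 0 ≤ K)
    (hf : ∀ z ∈ G, ∀ w ∈ G, ‖f z - f w‖ ≤ K * ω (dist z w)) :
    ∀ z ∈ G, ‖deriv h z‖ ≤ 2*K * (ω (infDist z (frontier G)) / infDist z (frontier G)) ∧
      ‖deriv g z‖ ≤ 2*K * (ω (infDist z (frontier G)) / infDist z (frontier G)) := by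
  intro z hz
  obtain ⟨hdpos, hball⟩ := dist_frontier_pos hGopen hGproper hz
  set d := infDist z (frontier G) with hd
  set r := d/2 with hrdef
  have hr : 0 < r := by positivity
  have hsub : closedBall z r ⊆ G := hball r (by rw [hrdef]; linarith)
  have hhr := hh.mono hsub
  have hgr := hg.mono hsub
  have hwθ : ∀ θ : ℝ, circleMap z r θ ∈ closedBall z r := fun θ =>
    sphere_subset_closedBall (circleMap_mem_sphere z hr.le θ)
  have hwG : ∀ θ : ℝ, circleMap z r θ ∈ G := fun θ => hsub (hwθ θ)
  have hdistw : ∀ θ : ℝ, dist (circleMap z r θ) z = r := fun θ =>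
    mem_sphere.mp (circleMap_mem_sphere z hr.le θ)
  set cu : ℝ → ℂ := fun θ => (starRingEnd ℂ) (circleMap 0 1 θ) with hcu
  set u : ℝ → ℂ := fun θ => circleMap 0 1 θ with huu
  have hcirc : Continuous (circleMap z r) := continuous_circleMap z r
  have huc : Continuous u := continuous_circleMap 0 1
  have hcuc : Continuous cu := Complex.continuous_conj.comp huc
  have hhc : ContinuousOn (fun θ : ℝ => h (circleMap z r θ)) (uIcc 0 (2*π)) :=
    hh.continuousOn.comp hcirc.continuousOn (fun θ _ => hwG θ)
  have hgc : ContinuousOn (fun θ : ℝ => (starRingEnd ℂ) (g (circleMap z r θ)))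
      (uIcc 0 (2*π)) :=
    Complex.continuous_conj.comp_continuousOn
      (hg.continuousOn.comp hcirc.continuousOn (fun θ _ => hwG θ))
  have hint1 : IntervalIntegrable (fun θ => cu θ * h (circleMap z r θ)) volume 0 (2*π) :=
    (hcuc.continuousOn.mul hhc).intervalIntegrable
  have hint2 : IntervalIntegrable (fun θ => cu θ * (starRingEnd ℂ) (g (circleMap z r θ)))
      volume 0 (2*π) := (hcuc.continuousOn.mul hgc).intervalIntegrable
  have hint3 : IntervalIntegrable (fun θ => cu θ * f z) volume 0 (2*π) :=
    ((hcuc.mul continuous_const).continuousOn).intervalIntegrable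
  have hint4 : IntervalIntegrable (fun θ => u θ * h (circleMap z r θ)) volume 0 (2*π) :=
    (huc.continuousOn.mul hhc).intervalIntegrable
  have hint5 : IntervalIntegrable (fun θ => u θ * (starRingEnd ℂ) (g (circleMap z r θ)))
      volume 0 (2*π) := (huc.continuousOn.mul hgc).intervalIntegrable
  have hint6 : IntervalIntegrable (fun θ => u θ * f z) volume 0 (2*π) :=
    ((huc.mul continuous_const).continuousOn).intervalIntegrable
  -- the two basic vanishing integrals
  have hcu0 : (∫ θ in (0:ℝ)..2*π, cu θ) = 0 := by
    rw [hcu]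
    have : (fun θ : ℝ => (starRingEnd ℂ) (circleMap 0 1 θ)) =
        fun θ : ℝ => (starRingEnd ℂ) ((fun t : ℝ => circleMap 0 1 t) θ) := rfl
    rw [this, intervalIntegral_conj, integral_circleMap_one, map_zero]
  have hu0 : (∫ θ in (0:ℝ)..2*π, u θ) = 0 := integral_circleMap_one
  -- splitting identities
  have esplit1 : (∫ θ in (0:ℝ)..2*π, cu θ * (f (circleMap z r θ) - f z))
      = (∫ θ in (0:ℝ)..2*π, cu θ * h (circleMap z r θ))
        + (∫ θ in (0:ℝ)..2*π, cu θ * (starRingEnd ℂ) (g (circleMap z r θ)))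
        - (∫ θ in (0:ℝ)..2*π, cu θ * f z) := by
    rw [← intervalIntegral.integral_add hint1 hint2,
      ← intervalIntegral.integral_sub (hint1.add hint2) hint3]
    refine intervalIntegral.integral_congr fun θ _ => ?_
    rw [hfdec _ (hwG θ)]
    ring
  have esplit2 : (∫ θ in (0:ℝ)..2*π, u θ * (f (circleMap z r θ) - f z))
      = (∫ θ in (0:ℝ)..2*π, u θ * h (circleMap z r θ))
        + (∫ θ in (0:ℝ)..2*π, u θ * (starRingEnd ℂ) (g (circleMap z r θ)))
        - (∫ θ in (0:ℝ)..2*π, u θ * f z) := by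
    rw [← intervalIntegral.integral_add hint4 hint5,
      ← intervalIntegral.integral_sub (hint4.add hint5) hint6]
    refine intervalIntegral.integral_congr fun θ _ => ?_
    rw [hfdec _ (hwG θ)]
    ring
  -- evaluate the pieces
  have p1 : (∫ θ in (0:ℝ)..2*π, cu θ * h (circleMap z r θ))
      = 2*(π:ℂ)*(r:ℂ) * deriv h z := circle_integral_kernel_conj hr hhr
  have p2 : (∫ θ in (0:ℝ)..2*π, cu θ * (starRingEnd ℂ) (g (circleMap z r θ))) = 0 := by
    have e : (fun θ : ℝ => cu θ * (starRingEnd ℂ) (g (circleMap z r θ)))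
        = fun θ : ℝ => (starRingEnd ℂ) (circleMap 0 1 θ * g (circleMap z r θ)) := by
      funext θ; rw [map_mul]
    rw [e, intervalIntegral_conj, circle_integral_kernel_mul hr hgr, map_zero]
  have p3 : (∫ θ in (0:ℝ)..2*π, cu θ * f z) = 0 := by
    rw [intervalIntegral.integral_mul_const, hcu0, zero_mul]
  have p4 : (∫ θ in (0:ℝ)..2*π, u θ * h (circleMap z r θ)) = 0 :=
    circle_integral_kernel_mul hr hhr
  have p5 : (∫ θ in (0:ℝ)..2*π, u θ * (starRingEnd ℂ) (g (circleMap z r θ)))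
      = (starRingEnd ℂ) (2*(π:ℂ)*(r:ℂ) * deriv g z) := by
    have e : (fun θ : ℝ => u θ * (starRingEnd ℂ) (g (circleMap z r θ)))
        = fun θ : ℝ => (starRingEnd ℂ) (cu θ * g (circleMap z r θ)) := by
      funext θ
      rw [map_mul, hcu]
      simp [Complex.conj_conj, huu]
    rw [e, intervalIntegral_conj, circle_integral_kernel_conj hr hgr]
  have p6 : (∫ θ in (0:ℝ)..2*π, u θ * f z) = 0 := by
    rw [intervalIntegral.integral_mul_const, hu0, zero_mul]
  -- norm bounds on the two integrals
  have hωr : 0 ≤ ω r := maj_nonneg hω hr.le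
  have hbound1 : ‖∫ θ in (0:ℝ)..2*π, cu θ * (f (circleMap z r θ) - f z)‖
      ≤ K * ω r * (2*π) := by
    have := intervalIntegral.norm_integral_le_of_norm_le_const
      (C := K * ω r) (a := (0:ℝ)) (b := 2*π)
      (f := fun θ => cu θ * (f (circleMap z r θ) - f z)) ?_
    · calc ‖∫ θ in (0:ℝ)..2*π, cu θ * (f (circleMap z r θ) - f z)‖
          ≤ K * ω r * |2*π - 0| := this
        _ = K * ω r * (2*π) := by rw [sub_zero, abs_of_pos Real.two_pi_pos]
    · intro θ _
      rw [norm_mul, hcu, RCLike.norm_conj, norm_circleMap_one, one_mul]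
      have := hf _ (hwG θ) z hz
      rwa [hdistw θ] at this
  have hbound2 : ‖∫ θ in (0:ℝ)..2*π, u θ * (f (circleMap z r θ) - f z)‖
      ≤ K * ω r * (2*π) := by
    have := intervalIntegral.norm_integral_le_of_norm_le_const
      (C := K * ω r) (a := (0:ℝ)) (b := 2*π)
      (f := fun θ => u θ * (f (circleMap z r θ) - f z)) ?_
    · calc ‖∫ θ in (0:ℝ)..2*π, u θ * (f (circleMap z r θ) - f z)‖
          ≤ K * ω r * |2*π - 0| := this
        _ = K * ω r * (2*π) := by rw [sub_zero, abs_of_pos Real.two_pi_pos]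
    · intro θ _
      rw [norm_mul, huu, norm_circleMap_one, one_mul]
      have := hf _ (hwG θ) z hz
      rwa [hdistw θ] at this
  have hnorm2πr : ∀ D : ℂ, ‖2*(π:ℂ)*(r:ℂ) * D‖ = 2*π*r * ‖D‖ := by
    intro D
    rw [norm_mul]
    congr 1
    rw [show (2*(π:ℂ)*(r:ℂ)) = (((2*π*r : ℝ)):ℂ) by push_cast; ring, Complex.norm_real,
      Real.norm_of_nonneg (by positivity)]
  have hkey1 : 2*π*r * ‖deriv h z‖ ≤ K * ω r * (2*π) := by
    rw [← hnorm2πr]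
    rw [esplit1, p1, p2, p3] at hbound1
    simpa using hbound1
  have hkey2 : 2*π*r * ‖deriv g z‖ ≤ K * ω r * (2*π) := by
    rw [← hnorm2πr]
    rw [esplit2, p4, p5, p6] at hbound2
    rw [show ((0:ℂ) + (starRingEnd ℂ) (2*(π:ℂ)*(r:ℂ) * deriv g z) - 0)
        = (starRingEnd ℂ) (2*(π:ℂ)*(r:ℂ) * deriv g z) by ring] at hbound2
    rwa [RCLike.norm_conj] at hbound2
  -- conclude
  have hωd : ω r ≤ ω d := maj_mono hω hr.le (by rw [hrdef]; linarith)
  have hfin : ∀ D : ℂ, 2*π*r * ‖D‖ ≤ K * ω r * (2*π) →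
      ‖D‖ ≤ 2*K * (ω d / d) := by
    intro D hD
    have hr' : ‖D‖ * r ≤ K * ω r := by nlinarith [Real.pi_pos, norm_nonneg D]
    have e : 2*K*(ω d/d) = (2*K*ω d)/d := by ring
    rw [e, le_div_iff₀ hdpos]
    have hd2 : ‖D‖ * d = 2*(‖D‖*r) := by rw [hrdef]; ring
    rw [hd2]
    nlinarith [hr', hωd, hK]
  exact ⟨hfin _ hkey1, hfin _ hkey2⟩

/-- Theorem 3: let `ω` be a majorant satisfying
`∫₀^δ ω(t)/t dt ≤ M ω(δ)` for all small `δ > 0`, and let `G` be a proper subdomain of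
the plane such that any two points of `G` are joined by a rectifiable curve `γ ⊆ G`
with `∫_γ ω(d_G(ζ))/d_G(ζ) ds(ζ) ≤ C ω(|z-w|)`. If `f = h + ḡ` is harmonic in `G`
with `h, g` analytic in `G`, then
`f ∈ L_ω(G) ↔ g, h ∈ L_ω(G) ↔ |g|, |h| ∈ L_ω(G)`. -/
theorem stmt7 (ω : ℝ → ℝ) (hω : IsMajorant ω)
    (M : ℝ) (hM : 0 < M) (δ₀ : ℝ) (hδ₀ : 0 < δ₀)
    (hωint : ∀ δ : ℝ, 0 < δ → δ < δ₀ → (∫ t in (0:ℝ)..δ, ω t / t) ≤ M * ω δ)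
    (G : Set ℂ) (hGopen : IsOpen G) (hGconn : IsConnected G) (hGproper : G ≠ univ)
    (C : ℝ) (hC : 0 < C)
    (hcurve : ∀ z ∈ G, ∀ w ∈ G, ∃ γ : ℝ → ℂ,
      γ 0 = z ∧ γ 1 = w ∧ (∀ t ∈ Icc (0:ℝ) 1, γ t ∈ G) ∧
      ContDiffOn ℝ 1 γ (Icc (0:ℝ) 1) ∧
      (∫ t in (0:ℝ)..1,
          ω (infDist (γ t) (frontier G)) / infDist (γ t) (frontier G) * ‖deriv γ t‖)
        ≤ C * ω (dist z w))
    (h g f : ℂ → ℂ) (hh : DifferentiableOn ℂ h G) (hg : DifferentiableOn ℂ g G)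
    (hfdec : ∀ z ∈ G, f z = h z + (starRingEnd ℂ) (g z)) :
    ((∃ K > (0 : ℝ), ∀ z ∈ G, ∀ w ∈ G, ‖f z - f w‖ ≤ K * ω (dist z w)) ↔
      ((∃ K > (0 : ℝ), ∀ z ∈ G, ∀ w ∈ G, ‖g z - g w‖ ≤ K * ω (dist z w)) ∧
        (∃ K > (0 : ℝ), ∀ z ∈ G, ∀ w ∈ G, ‖h z - h w‖ ≤ K * ω (dist z w)))) ∧
    (((∃ K > (0 : ℝ), ∀ z ∈ G, ∀ w ∈ G, ‖g z - g w‖ ≤ K * ω (dist z w)) ∧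
        (∃ K > (0 : ℝ), ∀ z ∈ G, ∀ w ∈ G, ‖h z - h w‖ ≤ K * ω (dist z w))) ↔
      ((∃ K > (0 : ℝ), ∀ z ∈ G, ∀ w ∈ G, abs (‖g z‖ - ‖g w‖) ≤ K * ω (dist z w)) ∧
        (∃ K > (0 : ℝ), ∀ z ∈ G, ∀ w ∈ G, abs (‖h z‖ - ‖h w‖) ≤ K * ω (dist z w)))) := by
  have hLip_of_bound : ∀ F : ℂ → ℂ, DifferentiableOn ℂ F G → ∀ K₀ : ℝ, 0 ≤ K₀ →
      (∀ z ∈ G, ‖deriv F z‖ ≤ K₀ * (ω (infDist z (frontier G)) / infDist z (frontier G))) →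
      ∃ K > (0:ℝ), ∀ z ∈ G, ∀ w ∈ G, ‖F z - F w‖ ≤ K * ω (dist z w) := by
    intro F hF K₀ hK₀ hb
    refine ⟨max (K₀*C) 1, lt_of_lt_of_le one_pos (le_max_right _ _), fun z hz w hw => ?_⟩
    have hZ := lipschitz_of_deriv_bound ω hω G hGopen hGproper C hcurve F hF K₀ hK₀ hb z hz w hw
    calc ‖F z - F w‖ ≤ K₀ * C * ω (dist z w) := hZ
      _ ≤ max (K₀*C) 1 * ω (dist z w) :=
          mul_le_mul_of_nonneg_right (le_max_left _ _) (maj_nonneg hω dist_nonneg)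
  have dir1 : (∃ K > (0 : ℝ), ∀ z ∈ G, ∀ w ∈ G, ‖f z - f w‖ ≤ K * ω (dist z w)) →
      ((∃ K > (0 : ℝ), ∀ z ∈ G, ∀ w ∈ G, ‖g z - g w‖ ≤ K * ω (dist z w)) ∧
        (∃ K > (0 : ℝ), ∀ z ∈ G, ∀ w ∈ G, ‖h z - h w‖ ≤ K * ω (dist z w))) := by
    rintro ⟨K, hKpos, hf⟩
    have hbd := deriv_bounds_of_f_lip ω hω G hGopen hGproper h g f hh hg hfdec K hKpos.le hf
    exact ⟨hLip_of_bound g hg (2*K) (by positivity) (fun z hz => (hbd z hz).2),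
           hLip_of_bound h hh (2*K) (by positivity) (fun z hz => (hbd z hz).1)⟩
  have dir2 : ((∃ K > (0 : ℝ), ∀ z ∈ G, ∀ w ∈ G, ‖g z - g w‖ ≤ K * ω (dist z w)) ∧
        (∃ K > (0 : ℝ), ∀ z ∈ G, ∀ w ∈ G, ‖h z - h w‖ ≤ K * ω (dist z w))) →
      (∃ K > (0 : ℝ), ∀ z ∈ G, ∀ w ∈ G, ‖f z - f w‖ ≤ K * ω (dist z w)) := by
    rintro ⟨⟨Kg, hKg, hgl⟩, ⟨Kh, hKh, hhl⟩⟩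
    refine ⟨Kg + Kh, by linarith, fun z hz w hw => ?_⟩
    rw [hfdec z hz, hfdec w hw]
    have e : h z + (starRingEnd ℂ) (g z) - (h w + (starRingEnd ℂ) (g w))
        = (h z - h w) + (starRingEnd ℂ) (g z - g w) := by
      rw [map_sub]; ring
    rw [e]
    refine le_trans (norm_add_le _ _) ?_
    rw [RCLike.norm_conj]
    have := hhl z hz w hw
    have := hgl z hz w hw
    linarith
  have dir3 : ((∃ K > (0 : ℝ), ∀ z ∈ G, ∀ w ∈ G, ‖g z - g w‖ ≤ K * ω (dist z w)) ∧
        (∃ K > (0 : ℝ), ∀ z ∈ G, ∀ w ∈ G, ‖h z - h w‖ ≤ K * ω (dist z w))) →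
      ((∃ K > (0 : ℝ), ∀ z ∈ G, ∀ w ∈ G, abs (‖g z‖ - ‖g w‖) ≤ K * ω (dist z w)) ∧
        (∃ K > (0 : ℝ), ∀ z ∈ G, ∀ w ∈ G, abs (‖h z‖ - ‖h w‖) ≤ K * ω (dist z w))) := by
    rintro ⟨⟨Kg, hKg, hgl⟩, ⟨Kh, hKh, hhl⟩⟩
    exact ⟨⟨Kg, hKg, fun z hz w hw =>
        le_trans (abs_norm_sub_norm_le _ _) (hgl z hz w hw)⟩,
      ⟨Kh, hKh, fun z hz w hw =>
        le_trans (abs_norm_sub_norm_le _ _) (hhl z hz w hw)⟩⟩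
  have dir4 : ((∃ K > (0 : ℝ), ∀ z ∈ G, ∀ w ∈ G, abs (‖g z‖ - ‖g w‖) ≤ K * ω (dist z w)) ∧
        (∃ K > (0 : ℝ), ∀ z ∈ G, ∀ w ∈ G, abs (‖h z‖ - ‖h w‖) ≤ K * ω (dist z w))) →
      ((∃ K > (0 : ℝ), ∀ z ∈ G, ∀ w ∈ G, ‖g z - g w‖ ≤ K * ω (dist z w)) ∧
        (∃ K > (0 : ℝ), ∀ z ∈ G, ∀ w ∈ G, ‖h z - h w‖ ≤ K * ω (dist z w))) := by
    rintro ⟨⟨Kg, hKg, hgl⟩, ⟨Kh, hKh, hhl⟩⟩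
    exact ⟨hLip_of_bound g hg (12*Kg) (by positivity)
        (pavlovic_bound ω hω G hGopen hGproper g hg Kg hKg.le hgl),
      hLip_of_bound h hh (12*Kh) (by positivity)
        (pavlovic_bound ω hω G hGopen hGproper h hh Kh hKh.le hhl)⟩
  exact ⟨⟨dir1, dir2⟩, ⟨dir3, dir4⟩⟩
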